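/- arXiv:1701.02136 — 2 statements merged into one kernel-verified Lean document; each statement's English description precedes it below -/
import Mathlib

section
/- For every r > 0 there exists a constant C > 0 (depending on n, s₀, r, T and the coefficients a^{jk}) such that for all t ∈ (0,T) and all x with 0 < |x| ≤ r one has |∂ₜ ( w(x,t)² / |∇ₓ w(x,t)|² )| ≤ C·w(x,t)². -/
open Set

/- The radial weight profile: `F s = ∫₀^s (e^{-u} - 1)/u du` (integrand extended
continuously by `-1` at `u = 0`), and `φ s = s · exp (F s)`. -/

noncomputable def Fwt (s : ℝ) : ℝ :=
  ∫ u in (0:ℝ)..s, if u = 0 then (-1 : ℝ) else (Real.exp (-u) - 1) / u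

noncomputable def phiw (s : ℝ) : ℝ := s * Real.exp (Fwt s)

/-- `σ(x,t)`: the distance from `x` to the origin in the metric `(a^{jk}(t,0))`. -/
noncomputable def sigw {n : ℕ} (a : Fin n → Fin n → ℝ → EuclideanSpace ℝ (Fin n) → ℝ)
    (x : EuclideanSpace ℝ (Fin n)) (t : ℝ) : ℝ :=
  Real.sqrt (∑ j, ∑ k, a j k t 0 * x j * x k)

/-- The Carleman weight `w(x,t) = φ(σ(x,t))`. -/
noncomputable def ww {n : ℕ} (a : Fin n → Fin n → ℝ → EuclideanSpace ℝ (Fin n) → ℝ)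
    (x : EuclideanSpace ℝ (Fin n)) (t : ℝ) : ℝ :=
  phiw (sigw a x t)

/-- Partial derivative in the `i`-th coordinate direction. -/
noncomputable def pd {n : ℕ} (f : EuclideanSpace ℝ (Fin n) → ℝ) (i : Fin n)
    (x : EuclideanSpace ℝ (Fin n)) : ℝ :=
  fderiv ℝ f x (EuclideanSpace.single i 1)

/-- `ℓ(t,x) = -λ ln w(x,t)`. -/
noncomputable def lw {n : ℕ} (a : Fin n → Fin n → ℝ → EuclideanSpace ℝ (Fin n) → ℝ)
    (lam t : ℝ) (x : EuclideanSpace ℝ (Fin n)) : ℝ :=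
  -lam * Real.log (ww a x t)

/-- `Ψ = 2 Σ_{j,k} (a^{jk} ℓ_{x_j})_{x_k}`. -/
noncomputable def Psiw {n : ℕ} (a : Fin n → Fin n → ℝ → EuclideanSpace ℝ (Fin n) → ℝ)
    (lam t : ℝ) (x : EuclideanSpace ℝ (Fin n)) : ℝ :=
  2 * ∑ j, ∑ k, pd (fun y => a j k t y * pd (lw a lam t) j y) k x

/-- `𝒜 = -Σ_{j,k} [a^{jk} ℓ_{x_j} ℓ_{x_k} + (a^{jk} ℓ_{x_j})_{x_k}] - ℓ_t`. -/
noncomputable def Aw {n : ℕ} (a : Fin n → Fin n → ℝ → EuclideanSpace ℝ (Fin n) → ℝ)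
    (lam t : ℝ) (x : EuclideanSpace ℝ (Fin n)) : ℝ :=
  -(∑ j, ∑ k, (a j k t x * pd (lw a lam t) j x * pd (lw a lam t) k x
      + pd (fun y => a j k t y * pd (lw a lam t) j y) k x))
    - deriv (fun s => lw a lam s x) t

/-- `c^{jk} = Σ_{j',k'}[2 a^{jk'}(a^{j'k} ℓ_{x_{j'}})_{x_{k'}} - (a^{jk} a^{j'k'} ℓ_{x_{j'}})_{x_{k'}}]
  - (1/2) ∂ₜ a^{jk} + Ψ a^{jk}`. -/
noncomputable def cw {n : ℕ} (a : Fin n → Fin n → ℝ → EuclideanSpace ℝ (Fin n) → ℝ)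
    (lam t : ℝ) (j k : Fin n) (x : EuclideanSpace ℝ (Fin n)) : ℝ :=
  (∑ j', ∑ k', (2 * a j k' t x * pd (fun y => a j' k t y * pd (lw a lam t) j' y) k' x
      - pd (fun y => a j k t y * a j' k' t y * pd (lw a lam t) j' y) k' x))
    - deriv (fun s => a j k s x) t / 2 + Psiw a lam t x * a j k t x

/-- `ℬ = 2[𝒜 Ψ - Σ_{j,k} (𝒜 a^{jk} ℓ_{x_j})_{x_k}] - ∂ₜ 𝒜 - Σ_{j,k} (a^{jk} Ψ_{x_k})_{x_j}`. -/
noncomputable def Bw {n : ℕ} (a : Fin n → Fin n → ℝ → EuclideanSpace ℝ (Fin n) → ℝ)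
    (lam t : ℝ) (x : EuclideanSpace ℝ (Fin n)) : ℝ :=
  2 * (Aw a lam t x * Psiw a lam t x
      - ∑ j, ∑ k, pd (fun y => Aw a lam t y * a j k t y * pd (lw a lam t) j y) k x)
    - deriv (fun s => Aw a lam s x) t
    - ∑ j, ∑ k, pd (fun y => a j k t y * pd (Psiw a lam t) k y) j x

/-- The spatial Laplacian. -/
noncomputable def lapl {n : ℕ} (f : EuclideanSpace ℝ (Fin n) → ℝ)
    (x : EuclideanSpace ℝ (Fin n)) : ℝ :=
  ∑ i, fderiv ℝ (fun y => fderiv ℝ f y (EuclideanSpace.single i 1)) x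
    (EuclideanSpace.single i 1)

noncomputable def gwt (u : ℝ) : ℝ := if u = 0 then (-1 : ℝ) else (Real.exp (-u) - 1) / u

lemma gwt_cont : Continuous gwt := by
  rw [continuous_iff_continuousAt]
  intro u
  rcases eq_or_ne u 0 with rfl | hu
  · have h : HasDerivAt (fun v : ℝ => Real.exp (-v)) (-1) 0 := by
      have := (Real.hasDerivAt_exp (-0 : ℝ)).comp 0 (hasDerivAt_neg (0:ℝ))
      simpa [Function.comp_def] using this
    have h2 : Filter.Tendsto (fun v : ℝ => (Real.exp (-v) - 1) / v) (nhdsWithin 0 {0}ᶜ)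
        (nhds (-1)) := by
      have h' := hasDerivAt_iff_tendsto_slope.mp h
      refine h'.congr' ?_
      filter_upwards [self_mem_nhdsWithin] with v hv
      simp [slope_def_field, Real.exp_zero]
    have h3 : Filter.Tendsto gwt (nhdsWithin 0 {0}ᶜ) (nhds (-1)) := by
      refine h2.congr' ?_
      filter_upwards [self_mem_nhdsWithin] with v hv
      simp [gwt, if_neg (show v ≠ 0 from hv)]
    have h4 : Filter.Tendsto gwt (nhds 0) (nhds (-1)) := by
      rw [← nhdsNE_sup_pure (0:ℝ), Filter.tendsto_sup]
      exact ⟨h3, by simpa [gwt] using tendsto_pure_nhds gwt 0⟩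
    simpa [ContinuousAt, gwt] using h4
  · have hca : ContinuousAt (fun v => (Real.exp (-v) - 1) / v) u := by
      fun_prop (disch := exact hu)
    refine hca.congr ?_
    filter_upwards [isOpen_compl_singleton.mem_nhds hu] with v hv
    simp [gwt, if_neg (show v ≠ 0 from hv)]

lemma gwt_ge {u : ℝ} (hu : 0 ≤ u) : -1 ≤ gwt u := by
  unfold gwt
  split
  · exact le_refl _
  · rename_i h
    have hu' : 0 < u := lt_of_le_of_ne hu (Ne.symm h)
    rw [le_div_iff₀ hu']
    have := Real.add_one_le_exp (-u)
    linarith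

lemma Fwt_hasDerivAt {s : ℝ} : HasDerivAt Fwt (gwt s) s :=
  (gwt_cont.integral_hasStrictDerivAt 0 s).hasDerivAt

lemma phiw_hasDerivAt {s : ℝ} (hs : 0 < s) :
    HasDerivAt phiw (Real.exp (Fwt s - s)) s := by
  have h1 : HasDerivAt (fun v => v * Real.exp (Fwt v))
      (1 * Real.exp (Fwt s) + s * (Real.exp (Fwt s) * gwt s)) s :=
    (hasDerivAt_id s).mul ((Fwt_hasDerivAt).exp)
  refine h1.congr_deriv ?_
  have hg : gwt s = (Real.exp (-s) - 1) / s := by simp [gwt, hs.ne']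
  rw [hg]
  field_simp [Real.exp_sub, Real.exp_neg]
  rw [Real.exp_sub, Real.exp_neg]; ring

lemma Fwt_ge {s : ℝ} (hs : 0 ≤ s) : -s ≤ Fwt s := by
  have h : Fwt s = ∫ u in (0:ℝ)..s, gwt u := rfl
  rw [h]
  have hmono := intervalIntegral.integral_mono_on (μ := MeasureTheory.volume) hs
    (intervalIntegrable_const (c := (-1:ℝ))) (gwt_cont.intervalIntegrable 0 s)
    (fun u hu => gwt_ge hu.1)
  simpa using hmono

noncomputable def vv {n : ℕ} (c : Fin n → Fin n → ℝ) (x : EuclideanSpace ℝ (Fin n)) :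
    EuclideanSpace ℝ (Fin n) := WithLp.toLp 2 (fun i => ∑ k, c i k * x k)

lemma vv_apply {n : ℕ} (c : Fin n → Fin n → ℝ) (x : EuclideanSpace ℝ (Fin n)) (i : Fin n) :
    vv c x i = ∑ k, c i k * x k := rfl

lemma vv_norm_sq {n : ℕ} (c : Fin n → Fin n → ℝ) (x : EuclideanSpace ℝ (Fin n)) :
    ‖vv c x‖^2 = ∑ i, (∑ k, c i k * x k)^2 := by
  rw [EuclideanSpace.norm_eq, Real.sq_sqrt (by positivity)]
  exact Finset.sum_congr rfl fun i _ => by rw [Real.norm_eq_abs, sq_abs]; rfl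

lemma coord_hasFDerivAt {n : ℕ} (j : Fin n) (x : EuclideanSpace ℝ (Fin n)) :
    HasFDerivAt (fun y : EuclideanSpace ℝ (Fin n) => y j)
      (EuclideanSpace.proj j : EuclideanSpace ℝ (Fin n) →L[ℝ] ℝ) x :=
  (EuclideanSpace.proj j : EuclideanSpace ℝ (Fin n) →L[ℝ] ℝ).hasFDerivAt

lemma quad_hasFDerivAt {n : ℕ} (c : Fin n → Fin n → ℝ) (x : EuclideanSpace ℝ (Fin n)) :
    HasFDerivAt (fun y : EuclideanSpace ℝ (Fin n) => ∑ j, ∑ k, c j k * y j * y k)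
      (∑ j : Fin n, ∑ k : Fin n, c j k •
        (x j • (EuclideanSpace.proj k : EuclideanSpace ℝ (Fin n) →L[ℝ] ℝ)
          + x k • (EuclideanSpace.proj j : EuclideanSpace ℝ (Fin n) →L[ℝ] ℝ))) x := by
  apply HasFDerivAt.fun_sum
  intro j _
  apply HasFDerivAt.fun_sum
  intro k _
  have h1 : HasFDerivAt (fun y : EuclideanSpace ℝ (Fin n) => y j * y k)
      (x j • (EuclideanSpace.proj k : EuclideanSpace ℝ (Fin n) →L[ℝ] ℝ)
        + x k • (EuclideanSpace.proj j : EuclideanSpace ℝ (Fin n) →L[ℝ] ℝ)) x :=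
    (coord_hasFDerivAt j x).mul (coord_hasFDerivAt k x)
  have h2 := h1.const_mul (c j k)
  simpa [mul_assoc] using h2

lemma quad_hasGradientAt {n : ℕ} (c : Fin n → Fin n → ℝ) (hsym : ∀ j k, c j k = c k j)
    (x : EuclideanSpace ℝ (Fin n)) :
    HasGradientAt (fun y : EuclideanSpace ℝ (Fin n) => ∑ j, ∑ k, c j k * y j * y k)
      ((2:ℝ) • (vv c x)) x := by
  rw [hasGradientAt_iff_hasFDerivAt]
  refine (quad_hasFDerivAt c x).congr_fderiv ?_
  symm
  refine ContinuousLinearMap.ext fun u => ?_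
  simp only [InnerProductSpace.toDual_apply_apply, ContinuousLinearMap.sum_apply,
    ContinuousLinearMap.add_apply, ContinuousLinearMap.smul_apply, smul_eq_mul]
  rw [real_inner_smul_left, PiLp.inner_apply]
  simp only [RCLike.inner_apply, conj_trivial, vv_apply, PiLp.proj_apply]
  have h1 : ∑ j, ∑ k, c j k * (x j * u k) = ∑ j, ∑ k, c j k * (x k * u j) := by
    rw [Finset.sum_comm]
    exact Finset.sum_congr rfl fun j _ => Finset.sum_congr rfl fun k _ => by
      rw [hsym k j]
  have h2 : ∀ (j k : Fin n), c j k * (x j * u k + x k * u j)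
      = c j k * (x j * u k) + c j k * (x k * u j) := fun j k => by ring
  simp_rw [h2, Finset.sum_add_distrib]
  rw [h1, ← two_mul, Finset.mul_sum]
  rw [Finset.mul_sum]
  refine Finset.sum_congr rfl fun j _ => ?_
  simp only [Finset.mul_sum]
  exact Finset.sum_congr rfl fun k _ => by ring

lemma ww_hasGradientAt {n : ℕ} (a : Fin n → Fin n → ℝ → EuclideanSpace ℝ (Fin n) → ℝ) (t : ℝ)
    (hsym : ∀ j k, a j k t (0:EuclideanSpace ℝ (Fin n)) = a k j t 0)
    (x : EuclideanSpace ℝ (Fin n))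
    (hq : 0 < ∑ j, ∑ k, a j k t 0 * x j * x k) :
    HasGradientAt (fun y => ww a y t)
      ((Real.exp (Fwt (sigw a x t) - sigw a x t) / sigw a x t)
        • vv (fun j k => a j k t 0) x) x := by
  set c : Fin n → Fin n → ℝ := fun j k => a j k t 0 with hc
  have hq' : (0:ℝ) < ∑ j, ∑ k, c j k * x j * x k := hq
  have hσ : sigw a x t = Real.sqrt (∑ j, ∑ k, c j k * x j * x k) := rfl
  have hσpos : 0 < sigw a x t := by rw [hσ]; exact Real.sqrt_pos.mpr hq'
  have h1 : HasFDerivAt (fun y : EuclideanSpace ℝ (Fin n) => ∑ j, ∑ k, c j k * y j * y k)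
      (InnerProductSpace.toDual ℝ _ ((2:ℝ) • vv c x)) x :=
    quad_hasGradientAt c hsym x
  have h2 : HasFDerivAt (fun y : EuclideanSpace ℝ (Fin n) => sigw a y t)
      ((1/(2*Real.sqrt (∑ j, ∑ k, c j k * x j * x k)))
        • InnerProductSpace.toDual ℝ _ ((2:ℝ) • vv c x)) x :=
    (Real.hasDerivAt_sqrt hq'.ne').comp_hasFDerivAt x h1
  have h3 := (phiw_hasDerivAt hσpos).comp_hasFDerivAt x h2
  rw [hasGradientAt_iff_hasFDerivAt]
  refine h3.congr_fderiv ?_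
  rw [map_smul, map_smul]
  rw [smul_smul, smul_smul]
  congr 1
  rw [← hσ]
  field_simp

lemma ratio_eq {n : ℕ} (a : Fin n → Fin n → ℝ → EuclideanSpace ℝ (Fin n) → ℝ) (t : ℝ)
    (hsym : ∀ j k, a j k t (0:EuclideanSpace ℝ (Fin n)) = a k j t 0)
    (x : EuclideanSpace ℝ (Fin n))
    (hq : 0 < ∑ j, ∑ k, a j k t 0 * x j * x k)
    (hN : 0 < ∑ i, (∑ k, a i k t 0 * x k)^2) :
    (ww a x t)^2 / ‖gradient (fun y => ww a y t) x‖^2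
      = (∑ j, ∑ k, a j k t 0 * x j * x k)^2
          * Real.exp (2 * Real.sqrt (∑ j, ∑ k, a j k t 0 * x j * x k))
          / (∑ i, (∑ k, a i k t 0 * x k)^2) := by
  set q : ℝ := ∑ j, ∑ k, a j k t 0 * x j * x k with hqdef
  set N : ℝ := ∑ i, (∑ k, a i k t 0 * x k)^2 with hNdef
  have hσ : sigw a x t = Real.sqrt q := rfl
  have hσpos : 0 < sigw a x t := by rw [hσ]; exact Real.sqrt_pos.mpr hq
  have hσq : (sigw a x t)^2 = q := by rw [hσ]; exact Real.sq_sqrt hq.le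
  have hvnorm : ‖vv (fun j k => a j k t 0) x‖^2 = N := vv_norm_sq _ x
  have hgrad := (ww_hasGradientAt a t hsym x hq).gradient
  rw [hgrad, norm_smul, mul_pow, Real.norm_eq_abs, sq_abs, hvnorm]
  have hw : ww a x t = sigw a x t * Real.exp (Fwt (sigw a x t)) := rfl
  rw [hw, Real.exp_sub]
  have hconv : Real.exp (2 * Real.sqrt q) = (Real.exp (sigw a x t))^2 := by
    rw [← hσ, two_mul, Real.exp_add, sq]
  rw [hconv]
  have hE : (0:ℝ) < Real.exp (Fwt (sigw a x t)) := Real.exp_pos _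
  have hD : (0:ℝ) < Real.exp (sigw a x t) := Real.exp_pos _
  field_simp
  rw [← hσq]
  ring

lemma coord_le_norm {n : ℕ} (x : EuclideanSpace ℝ (Fin n)) (j : Fin n) : |x j| ≤ ‖x‖ := by
  rw [EuclideanSpace.norm_eq]
  rw [show |x j| = Real.sqrt ((x j)^2) from (Real.sqrt_sq_eq_abs _).symm]
  apply Real.sqrt_le_sqrt
  have := Finset.single_le_sum (f := fun i => ‖x i‖^2) (fun i _ => by positivity)
    (Finset.mem_univ j)
  simpa [Real.norm_eq_abs, sq_abs] using this

lemma N_ge {n : ℕ} (c : Fin n → Fin n → ℝ) (x : EuclideanSpace ℝ (Fin n)) (s0 : ℝ)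
    (hs0 : 0 ≤ s0) (hx : 0 < ‖x‖)
    (hq : s0 * ‖x‖^2 ≤ ∑ j, ∑ k, c j k * x j * x k) :
    s0^2 * ‖x‖^2 ≤ ∑ i, (∑ k, c i k * x k)^2 := by
  have hvn : (∑ i, (∑ k, c i k * x k)^2) = ‖vv c x‖^2 := (vv_norm_sq c x).symm
  have hqv : (∑ j, ∑ k, c j k * x j * x k) = (inner ℝ (vv c x) x : ℝ) := by
    rw [PiLp.inner_apply]
    simp only [RCLike.inner_apply, conj_trivial]
    refine Finset.sum_congr rfl fun j _ => ?_
    rw [vv_apply, Finset.mul_sum]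
    exact Finset.sum_congr rfl fun k _ => by ring
  have hcs : (inner ℝ (vv c x) x : ℝ) ≤ ‖vv c x‖ * ‖x‖ := real_inner_le_norm _ _
  rw [hvn]
  have h2 : s0 * ‖x‖ * ‖x‖ ≤ ‖vv c x‖ * ‖x‖ := by
    rw [hqv] at hq; nlinarith
  have h1 : s0 * ‖x‖ ≤ ‖vv c x‖ := le_of_mul_le_mul_right h2 hx
  nlinarith [norm_nonneg (vv c x), norm_nonneg x]

set_option maxHeartbeats 2000000 in
theorem stmt_5
    (n : ℕ) (hn : 1 ≤ n) (T s₀ : ℝ) (hT : 0 < T) (hs₀ : 0 < s₀)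
    (a : Fin n → Fin n → ℝ → EuclideanSpace ℝ (Fin n) → ℝ)
    (ha_smooth : ∀ j k, ContDiff ℝ 2 fun p : ℝ × EuclideanSpace ℝ (Fin n) => a j k p.1 p.2)
    (ha_symm : ∀ j k t x, a j k t x = a k j t x)
    (ha_ell : ∀ t ∈ Icc (0:ℝ) T, ∀ x ξ : EuclideanSpace ℝ (Fin n),
      s₀ * ‖ξ‖ ^ 2 ≤ ∑ j, ∑ k, a j k t x * ξ j * ξ k) :
    ∀ r : ℝ, 0 < r → ∃ C : ℝ, 0 < C ∧ ∀ t ∈ Ioo (0:ℝ) T,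
      ∀ x : EuclideanSpace ℝ (Fin n), 0 < ‖x‖ → ‖x‖ ≤ r →
        |deriv (fun s => (ww a x s) ^ 2 / ‖gradient (fun y => ww a y s) x‖ ^ 2) t|
          ≤ C * (ww a x t) ^ 2 := by
  have hn' : (1:ℝ) ≤ (n:ℝ) := by exact_mod_cast hn
  have hcd : ∀ j k : Fin n, ContDiff ℝ 2 (fun s : ℝ => a j k s (0 : EuclideanSpace ℝ (Fin n))) :=
    fun j k => (ha_smooth j k).comp (contDiff_id.prodMk contDiff_const)
  have hdiff : ∀ (j k : Fin n) (s : ℝ), HasDerivAt (fun u : ℝ => a j k u 0)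
      (deriv (fun u : ℝ => a j k u 0) s) s := fun j k s =>
    (((hcd j k).differentiable (by norm_num)) s).hasDerivAt
  have hdc : ∀ j k : Fin n, Continuous (deriv (fun u : ℝ => a j k u 0)) := fun j k =>
    (hcd j k).continuous_deriv (by norm_num)
  intro r hr
  -- uniform bound on coefficients and their time derivatives
  obtain ⟨M₀, hM₀⟩ := (isCompact_Icc (a := (0:ℝ)) (b := T)).exists_bound_of_continuousOn
    (f := fun s : ℝ => ∑ p : Fin n × Fin n,
      (|a p.1 p.2 s 0| + |deriv (fun u => a p.1 p.2 u 0) s|))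
    (Continuous.continuousOn (by
      refine continuous_finset_sum _ fun p _ => Continuous.add ?_ ?_
      · exact ((hcd p.1 p.2).continuous).abs
      · exact (hdc p.1 p.2).abs))
  set M : ℝ := max M₀ 1 with hMdef
  have hM1 : (1:ℝ) ≤ M := le_max_right _ _
  have hM0 : (0:ℝ) < M := lt_of_lt_of_le one_pos hM1
  have hMb : ∀ s ∈ Icc (0:ℝ) T, ∀ j k : Fin n,
      |a j k s 0| ≤ M ∧ |deriv (fun u => a j k u 0) s| ≤ M := by
    intro s hs j k
    have h := hM₀ s hs
    rw [Real.norm_eq_abs] at h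
    have hterm : |a j k s 0| + |deriv (fun u => a j k u 0) s|
        ≤ ∑ p : Fin n × Fin n, (|a p.1 p.2 s 0| + |deriv (fun u => a p.1 p.2 u 0) s|) :=
      Finset.single_le_sum (f := fun p : Fin n × Fin n =>
        (|a p.1 p.2 s 0| + |deriv (fun u => a p.1 p.2 u 0) s|))
        (fun p _ => by positivity) (Finset.mem_univ ((j, k) : Fin n × Fin n))
    have habs : (∑ p : Fin n × Fin n, (|a p.1 p.2 s 0| + |deriv (fun u => a p.1 p.2 u 0) s|))
        ≤ |∑ p : Fin n × Fin n, (|a p.1 p.2 s 0| + |deriv (fun u => a p.1 p.2 u 0) s|)| :=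
      le_abs_self _
    have hMM : M₀ ≤ M := le_max_left _ _
    constructor
    · have := abs_nonneg (deriv (fun u => a j k u 0) s); linarith
    · have := abs_nonneg (a j k s 0); linarith
  set R : ℝ := Real.sqrt ((n:ℝ)^2 * M * r^2) with hRdef
  have hR0 : (0:ℝ) ≤ R := Real.sqrt_nonneg _
  set K : ℝ := (n:ℝ)^5 * M^3 * (R+4) / s₀^4 with hKdef
  have hK0 : (0:ℝ) < K := by positivity
  refine ⟨K * Real.exp (4*R) + 1, by positivity, ?_⟩
  intro t ht x hx hxr
  set m : ℝ := ‖x‖ with hmdef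
  have htI : t ∈ Icc (0:ℝ) T := ⟨ht.1.le, ht.2.le⟩
  have hcoord : ∀ j, |x j| ≤ m := fun j => coord_le_norm x j
  set q : ℝ → ℝ := fun s => ∑ j, ∑ k, a j k s 0 * x j * x k with hqdef
  set N : ℝ → ℝ := fun s => ∑ i, (∑ k, a i k s 0 * x k)^2 with hNdef
  have hqlb : ∀ s ∈ Icc (0:ℝ) T, s₀ * m^2 ≤ q s := fun s hs => ha_ell s hs 0 x
  have hq0 : ∀ s ∈ Icc (0:ℝ) T, 0 < q s := fun s hs =>
    lt_of_lt_of_le (by positivity) (hqlb s hs)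
  have hNlb : ∀ s ∈ Icc (0:ℝ) T, s₀^2 * m^2 ≤ N s := fun s hs =>
    N_ge (fun j k => a j k s 0) x s₀ hs₀.le hx (hqlb s hs)
  have hN0 : ∀ s ∈ Icc (0:ℝ) T, 0 < N s := fun s hs =>
    lt_of_lt_of_le (by positivity) (hNlb s hs)
  -- replace the function by the explicit formula near t
  have hev : (fun s => (ww a x s)^2 / ‖gradient (fun y => ww a y s) x‖^2)
      =ᶠ[nhds t] (fun s => (q s)^2 * Real.exp (2*Real.sqrt (q s)) / N s) := by
    filter_upwards [Ioo_mem_nhds ht.1 ht.2] with s hs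
    exact ratio_eq a s (fun j k => ha_symm j k s 0) x
      (hq0 s (Ioo_subset_Icc_self hs)) (hN0 s (Ioo_subset_Icc_self hs))
  rw [hev.deriv_eq]
  -- derivative computation at t
  set P : ℝ := q t with hPdef
  have hP : 0 < P := hq0 t htI
  set σ : ℝ := Real.sqrt P with hσdef
  have hσpos : 0 < σ := Real.sqrt_pos.mpr hP
  have hσsq : σ^2 = P := Real.sq_sqrt hP.le
  set q' : ℝ := ∑ j, ∑ k, deriv (fun u => a j k u 0) t * x j * x k with hq'def
  have hq'd : HasDerivAt q q' t := by
    refine HasDerivAt.fun_sum fun j _ => HasDerivAt.fun_sum fun k _ => ?_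
    exact ((hdiff j k t).mul_const (x j)).mul_const (x k)
  set vt : Fin n → ℝ := fun i => ∑ k, a i k t 0 * x k with hvtdef
  set v' : Fin n → ℝ := fun i => ∑ k, deriv (fun u => a i k u 0) t * x k with hv'def
  have hvd : ∀ i, HasDerivAt (fun s => ∑ k, a i k s 0 * x k) (v' i) t := fun i =>
    HasDerivAt.fun_sum fun k _ => (hdiff i k t).mul_const (x k)
  set N' : ℝ := ∑ i, 2 * vt i * v' i with hN'def
  have hNd : HasDerivAt N N' t := by
    refine HasDerivAt.fun_sum fun i _ => ?_
    have h := (hvd i).pow 2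
    simpa [pow_one, Pi.pow_def] using h
  have hσd : HasDerivAt (fun s => Real.sqrt (q s)) (1/(2*σ) * q') t :=
    (Real.hasDerivAt_sqrt hP.ne').comp t hq'd
  have hexpd : HasDerivAt (fun s => Real.exp (2*Real.sqrt (q s)))
      (Real.exp (2*σ) * (2*(1/(2*σ) * q'))) t := by
    have h := (hσd.const_mul 2).exp
    simpa [hσdef] using h
  set u' : ℝ := ((2:ℕ) * P^1 * q') * Real.exp (2*σ)
      + P^2 * (Real.exp (2*σ) * (2*(1/(2*σ) * q'))) with hu'def
  have hud : HasDerivAt (fun s => (q s)^2 * Real.exp (2*Real.sqrt (q s))) u' t := by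
    have h := (hq'd.pow 2).mul hexpd
    simpa [hu'def, Pi.mul_def, Pi.pow_apply] using h
  have hNt0 : N t ≠ 0 := (hN0 t htI).ne'
  have hhd : HasDerivAt (fun s => (q s)^2 * Real.exp (2*Real.sqrt (q s)) / N s)
      ((u' * N t - (q t)^2 * Real.exp (2*Real.sqrt (q t)) * N') / (N t)^2) t :=
    hud.div hNd hNt0
  rw [hhd.deriv]
  -- now the estimates
  have hmr : m ≤ r := hxr
  have hm0 : 0 < m := hx
  -- generic double-sum bound
  have habs2 : ∀ (f : Fin n → Fin n → ℝ) (B : ℝ), (∀ j k, |f j k| ≤ B) →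
      |∑ j, ∑ k, f j k * x j * x k| ≤ (n:ℝ)^2 * B * m^2 := by
    intro f B hB
    have hB0 : 0 ≤ B := le_trans (abs_nonneg _) (hB ⟨0, hn⟩ ⟨0, hn⟩)
    calc |∑ j, ∑ k, f j k * x j * x k| ≤ ∑ j, ∑ k, |f j k * x j * x k| := by
          refine (Finset.abs_sum_le_sum_abs _ _).trans ?_
          exact Finset.sum_le_sum fun j _ => Finset.abs_sum_le_sum_abs _ _
      _ ≤ ∑ _j : Fin n, ∑ _k : Fin n, B * m * m := by
          refine Finset.sum_le_sum fun j _ => Finset.sum_le_sum fun k _ => ?_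
          rw [abs_mul, abs_mul]
          have h1 : |f j k| * |x j| ≤ B * m :=
            mul_le_mul (hB j k) (hcoord j) (abs_nonneg _) hB0
          exact mul_le_mul h1 (hcoord k) (abs_nonneg _) (by positivity)
      _ = (n:ℝ)^2 * B * m^2 := by
          simp [Finset.sum_const, Finset.card_univ, nsmul_eq_mul]
          ring
  have habs1 : ∀ (f : Fin n → ℝ) (B : ℝ), 0 ≤ B → (∀ k, |f k| ≤ B) →
      |∑ k, f k * x k| ≤ (n:ℝ) * B * m := by
    intro f B hB0 hB
    calc |∑ k, f k * x k| ≤ ∑ k, |f k * x k| := Finset.abs_sum_le_sum_abs _ _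
      _ ≤ ∑ _k : Fin n, B * m := by
          refine Finset.sum_le_sum fun k _ => ?_
          rw [abs_mul]
          exact mul_le_mul (hB k) (hcoord k) (abs_nonneg _) hB0
      _ = (n:ℝ) * B * m := by
          simp [Finset.sum_const, Finset.card_univ, nsmul_eq_mul]
          ring
  have hPb : P ≤ (n:ℝ)^2 * M * m^2 :=
    le_trans (le_abs_self _) (habs2 _ M (fun j k => (hMb t htI j k).1))
  have hq'b : |q'| ≤ (n:ℝ)^2 * M * m^2 := habs2 _ M (fun j k => (hMb t htI j k).2)
  have hvtb : ∀ i, |vt i| ≤ (n:ℝ) * M * m := fun i =>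
    habs1 _ M hM0.le (fun k => (hMb t htI i k).1)
  have hv'b : ∀ i, |v' i| ≤ (n:ℝ) * M * m := fun i =>
    habs1 _ M hM0.le (fun k => (hMb t htI i k).2)
  have hNb : N t ≤ (n:ℝ)^3 * M^2 * m^2 := by
    have : N t ≤ ∑ _i : Fin n, ((n:ℝ)*M*m)^2 := by
      refine Finset.sum_le_sum fun i _ => ?_
      have := hvtb i
      calc (vt i)^2 = |vt i|^2 := (sq_abs _).symm
        _ ≤ ((n:ℝ)*M*m)^2 := by
            have h0 : (0:ℝ) ≤ |vt i| := abs_nonneg _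
            nlinarith
    calc N t ≤ ∑ _i : Fin n, ((n:ℝ)*M*m)^2 := this
      _ = (n:ℝ) * ((n:ℝ)*M*m)^2 := by
          simp [Finset.sum_const, Finset.card_univ, nsmul_eq_mul]
      _ = (n:ℝ)^3 * M^2 * m^2 := by ring
  have hN'b : |N'| ≤ 2 * (n:ℝ)^3 * M^2 * m^2 := by
    calc |N'| ≤ ∑ i, |2 * vt i * v' i| := Finset.abs_sum_le_sum_abs _ _
      _ ≤ ∑ _i : Fin n, 2 * ((n:ℝ)*M*m) * ((n:ℝ)*M*m) := by
          refine Finset.sum_le_sum fun i _ => ?_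
          rw [abs_mul, abs_mul, abs_two]
          have h1 : (2:ℝ) * |vt i| ≤ 2 * ((n:ℝ)*M*m) := by
            have := hvtb i; linarith
          refine mul_le_mul h1 (hv'b i) (abs_nonneg _) (by positivity)
      _ = (n:ℝ) * (2 * ((n:ℝ)*M*m) * ((n:ℝ)*M*m)) := by
          simp [Finset.sum_const, Finset.card_univ, nsmul_eq_mul]
      _ = 2 * (n:ℝ)^3 * M^2 * m^2 := by ring
  have hσR : σ ≤ R := by
    rw [hσdef, hRdef]
    apply Real.sqrt_le_sqrt
    calc P ≤ (n:ℝ)^2 * M * m^2 := hPb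
      _ ≤ (n:ℝ)^2 * M * r^2 := by
          have hm2 : m^2 ≤ r^2 := by nlinarith
          exact mul_le_mul_of_nonneg_left hm2 (by positivity)
  have hexpb : Real.exp (2*σ) ≤ Real.exp (2*R) := Real.exp_le_exp.mpr (by linarith)
  -- closed form for u'
  have hu'eq : u' = Real.exp (2*σ) * q' * (P * (2 + σ)) := by
    rw [hu'def]
    rw [show P = σ^2 from hσsq.symm]
    field_simp
    ring
  have hu'b : |u'| ≤ Real.exp (2*R) * ((n:ℝ)^2*M*m^2) * (P * (2 + R)) := by
    rw [hu'eq, abs_mul, abs_mul]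
    rw [abs_of_pos (Real.exp_pos _), abs_of_pos (by positivity : (0:ℝ) < P * (2+σ))]
    have h1 : Real.exp (2*σ) * |q'| ≤ Real.exp (2*R) * ((n:ℝ)^2*M*m^2) :=
      mul_le_mul hexpb hq'b (abs_nonneg _) (Real.exp_pos _).le
    have h2 : P * (2 + σ) ≤ P * (2 + R) := by nlinarith
    exact mul_le_mul h1 h2 (by positivity) (by positivity)
  have hub : (q t)^2 * Real.exp (2*Real.sqrt (q t)) ≤ P * ((n:ℝ)^2*M*m^2) * Real.exp (2*R) := by
    have h1 : (q t)^2 = P * P := by rw [← hPdef]; ring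
    rw [h1, ← hσdef]
    calc P * P * Real.exp (2*σ) ≤ P * ((n:ℝ)^2*M*m^2) * Real.exp (2*σ) := by
          exact mul_le_mul_of_nonneg_right (mul_le_mul_of_nonneg_left hPb hP.le)
            (Real.exp_pos (2*σ)).le
      _ ≤ P * ((n:ℝ)^2*M*m^2) * Real.exp (2*R) := by
          have hh : (0:ℝ) ≤ P * ((n:ℝ)^2*M*m^2) := by positivity
          exact mul_le_mul_of_nonneg_left hexpb hh
  -- numerator bound
  have hnum : |u' * N t - (q t)^2 * Real.exp (2*Real.sqrt (q t)) * N'|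
      ≤ P * Real.exp (2*R) * (n:ℝ)^5 * M^3 * (R+4) * m^4 := by
    have hNtpos := hN0 t htI
    have h1 : |u' * N t - (q t)^2 * Real.exp (2*Real.sqrt (q t)) * N'|
        ≤ |u'| * N t + (q t)^2 * Real.exp (2*Real.sqrt (q t)) * |N'| := by
      refine (abs_sub (u' * N t) _).trans ?_
      rw [abs_mul, abs_mul, abs_of_pos hNtpos]
      have : |(q t)^2 * Real.exp (2*Real.sqrt (q t))|
          = (q t)^2 * Real.exp (2*Real.sqrt (q t)) := by
        apply abs_of_pos; positivity
      rw [this]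
    refine h1.trans ?_
    have h2 : |u'| * N t ≤ (Real.exp (2*R) * ((n:ℝ)^2*M*m^2) * (P * (2 + R)))
        * ((n:ℝ)^3 * M^2 * m^2) :=
      mul_le_mul hu'b hNb hNtpos.le (by positivity)
    have h3 : (q t)^2 * Real.exp (2*Real.sqrt (q t)) * |N'|
        ≤ (P * ((n:ℝ)^2*M*m^2) * Real.exp (2*R)) * (2 * (n:ℝ)^3 * M^2 * m^2) :=
      mul_le_mul hub hN'b (abs_nonneg _) (by positivity)
    have h4 : (Real.exp (2*R) * ((n:ℝ)^2*M*m^2) * (P * (2 + R))) * ((n:ℝ)^3 * M^2 * m^2)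
        + (P * ((n:ℝ)^2*M*m^2) * Real.exp (2*R)) * (2 * (n:ℝ)^3 * M^2 * m^2)
        = P * Real.exp (2*R) * (n:ℝ)^5 * M^3 * (R+4) * m^4 := by ring
    linarith
  -- denominator bound
  have hden : (s₀^2 * m^2)^2 ≤ (N t)^2 := by
    have h := hNlb t htI
    have h0 : (0:ℝ) ≤ s₀^2 * m^2 := by positivity
    nlinarith
  have hDb : |(u' * N t - (q t)^2 * Real.exp (2*Real.sqrt (q t)) * N') / (N t)^2|
      ≤ P * Real.exp (2*R) * K := by
    rw [abs_div, abs_of_pos (by positivity : (0:ℝ) < (N t)^2)]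
    have hstep : |u' * N t - (q t)^2 * Real.exp (2*Real.sqrt (q t)) * N'| / (N t)^2
        ≤ (P * Real.exp (2*R) * (n:ℝ)^5 * M^3 * (R+4) * m^4) / ((s₀^2 * m^2)^2) :=
      div_le_div₀ (by positivity) hnum (by positivity) hden
    refine hstep.trans (le_of_eq ?_)
    rw [hKdef]
    field_simp
  refine hDb.trans ?_
  -- finally compare P with (ww a x t)^2
  have hwsq : (ww a x t)^2 = P * Real.exp (2 * Fwt σ) := by
    have hw : ww a x t = σ * Real.exp (Fwt σ) := rfl
    rw [hw, mul_pow, hσsq, pow_two, ← Real.exp_add, two_mul]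
  have hFge : -R ≤ Fwt σ := le_trans (by linarith) (Fwt_ge hσpos.le)
  have hPw : P ≤ (ww a x t)^2 * Real.exp (2*R) := by
    have h1 : P * Real.exp (-(2*R)) ≤ (ww a x t)^2 := by
      rw [hwsq]
      have : Real.exp (-(2*R)) ≤ Real.exp (2 * Fwt σ) :=
        Real.exp_le_exp.mpr (by linarith)
      nlinarith [Real.exp_pos (-(2*R))]
    have h2 := mul_le_mul_of_nonneg_right h1 (Real.exp_pos (2*R)).le
    rw [mul_assoc, ← Real.exp_add, neg_add_cancel, Real.exp_zero, mul_one] at h2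
    exact h2
  calc P * Real.exp (2*R) * K ≤ ((ww a x t)^2 * Real.exp (2*R)) * Real.exp (2*R) * K := by
        have h0 : (0:ℝ) < Real.exp (2*R) * K := by positivity
        nlinarith
    _ = (K * Real.exp (4*R)) * (ww a x t)^2 := by
        have hee : Real.exp (2*R) * Real.exp (2*R) = Real.exp (4*R) := by
          rw [← Real.exp_add]; ring_nf
        linear_combination (ww a x t)^2 * K * hee
    _ ≤ (K * Real.exp (4*R) + 1) * (ww a x t)^2 := by
        nlinarith [sq_nonneg (ww a x t)]
end

section
/- Let r₀ > 0, C > 0, and let X, M be nonnegative real numbers. Let F : (0, r₀) → [0, +∞) be a function such that for every positive integer N there exists C_N > 0 with F(r) ≤ C_N r^{2N} for all r ∈ (0, r₀). Suppose that for every r ∈ (0, r₀), X ≤ C · F(r)^{ε(r)/2} · M^{1 − ε(r)}, where ε(r) = ln 2 / ln(2r₀/r). Then X = 0. -/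
open Set Real

/-- Final step of the strong unique continuation argument: if `F` vanishes of
infinite order at `0` (i.e. `F(r) = O(r^{2N})` for every `N`) and
`X ≤ C F(r)^{ε(r)/2} M^{1-ε(r)}` for every `r ∈ (0, r₀)`, where
`ε(r) = ln 2 / ln (2r₀/r)`, then `X = 0`. -/
theorem stmt_16 (r₀ C X M : ℝ) (hr₀ : 0 < r₀) (hC : 0 < C) (hX : 0 ≤ X) (hM : 0 ≤ M)
    (F : ℝ → ℝ) (hF : ∀ r ∈ Ioo (0 : ℝ) r₀, 0 ≤ F r)
    (hvan : ∀ N : ℕ, 0 < N → ∃ C_N : ℝ, 0 < C_N ∧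
      ∀ r ∈ Ioo (0 : ℝ) r₀, F r ≤ C_N * r ^ (2 * N))
    (hint : ∀ r ∈ Ioo (0 : ℝ) r₀,
      X ≤ C * F r ^ ((Real.log 2 / Real.log (2 * r₀ / r)) / 2) *
            M ^ (1 - Real.log 2 / Real.log (2 * r₀ / r))) :
    X = 0 := by
  by_contra hX0
  have hXpos : 0 < X := hX.lt_of_ne (Ne.symm hX0)
  have hlog2 : 0 < Real.log 2 := Real.log_pos (by norm_num)
  have hr2 : r₀ / 2 ∈ Ioo (0 : ℝ) r₀ := ⟨by linarith, by linarith⟩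
  have hεhalf : Real.log 2 / Real.log (2 * r₀ / (r₀ / 2)) = 1 / 2 := by
    have h4 : 2 * r₀ / (r₀ / 2) = 4 := by field_simp; ring
    rw [h4, show (4:ℝ) = 2 ^ (2:ℕ) by norm_num, Real.log_pow]
    field_simp
    ring
  -- M > 0
  have hMpos : 0 < M := by
    rcases hM.lt_or_eq with h | h
    · exact h
    · exfalso
      have h1 := hint (r₀ / 2) hr2
      rw [hεhalf, ← h, show (1 : ℝ) - 1 / 2 = 1 / 2 by norm_num,
        Real.zero_rpow (by norm_num)] at h1
      simp at h1
      linarith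
  -- F is positive on Ioo
  have hFpos : ∀ r ∈ Ioo (0 : ℝ) r₀, 0 < F r := by
    intro r hr
    rcases (hF r hr).lt_or_eq with h | h
    · exact h
    · exfalso
      have hrr : 1 < 2 * r₀ / r := by
        rw [lt_div_iff₀ hr.1]; linarith [hr.2]
      have hlr : 0 < Real.log (2 * r₀ / r) := Real.log_pos hrr
      have h1 := hint r hr
      rw [← h, Real.zero_rpow (ne_of_gt (by positivity))] at h1
      simp at h1
      linarith
  -- key estimate
  have key : ∀ N : ℕ, 0 < N →
      Real.log X ≤ Real.log C + Real.log M + 1 - N * Real.log 2 := by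
    intro N hN
    obtain ⟨C_N, hCN, hbound⟩ := hvan N hN
    set A : ℝ := (1 / 2) * Real.log C_N + N * Real.log (2 * r₀) - Real.log M with hA
    obtain ⟨m, hm2, hmA⟩ : ∃ m : ℕ, 2 ≤ m ∧ A ≤ m := by
      refine ⟨max 2 ⌈A⌉₊, le_max_left _ _, ?_⟩
      calc A ≤ ⌈A⌉₊ := Nat.le_ceil A
        _ ≤ ((max 2 ⌈A⌉₊ : ℕ) : ℝ) := by exact_mod_cast le_max_right _ _
    have hmpos : (0 : ℝ) < m := by positivity
    set r : ℝ := 2 * r₀ / 2 ^ m with hrdef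
    have hrpos : 0 < r := by positivity
    have hrIoo : r ∈ Ioo (0 : ℝ) r₀ := by
      refine ⟨hrpos, ?_⟩
      rw [hrdef, div_lt_iff₀ (by positivity)]
      have h4 : (4 : ℝ) ≤ 2 ^ m := by
        calc (4 : ℝ) = 2 ^ 2 := by norm_num
          _ ≤ 2 ^ m := pow_le_pow_right₀ (by norm_num) hm2
      nlinarith
    have hratio : 2 * r₀ / r = 2 ^ m := by
      rw [hrdef]
      field_simp
    have hε : Real.log 2 / Real.log (2 * r₀ / r) = 1 / m := by
      rw [hratio, Real.log_pow, div_eq_div_iff (by positivity) (ne_of_gt hmpos)]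
      ring
    have hFr := hFpos r hrIoo
    -- take logs of the interpolation inequality
    have h1 : Real.log X ≤ Real.log C + (1 / m / 2) * Real.log (F r)
        + (1 - 1 / m) * Real.log M := by
      have := Real.log_le_log hXpos (hint r hrIoo)
      rw [hε] at this
      rwa [Real.log_mul (by positivity) (ne_of_gt (Real.rpow_pos_of_pos hMpos _)),
        Real.log_mul (ne_of_gt hC) (ne_of_gt (Real.rpow_pos_of_pos hFr _)),
        Real.log_rpow hFr, Real.log_rpow hMpos] at this
    -- log of the vanishing bound
    have h2 : Real.log (F r) ≤ Real.log C_N + (2 * N) * Real.log r := by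
      have := Real.log_le_log hFr (hbound r hrIoo)
      rwa [Real.log_mul (ne_of_gt hCN) (by positivity), Real.log_pow,
        Nat.cast_mul, Nat.cast_ofNat] at this
    have hlr : Real.log r = Real.log (2 * r₀) - m * Real.log 2 := by
      rw [hrdef, Real.log_div (by positivity) (by positivity), Real.log_pow]
    rw [hlr] at h2
    -- multiply h2 by 1/(2m) ≥ 0
    have h3 : (1 / m / 2) * Real.log (F r)
        ≤ (1 / m) * A + (1 / m) * Real.log M - N * Real.log 2 := by
      have hmul := mul_le_mul_of_nonneg_left h2 (by positivity :
        (0 : ℝ) ≤ 1 / (m : ℝ) / 2)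
      calc (1 / m / 2) * Real.log (F r)
          ≤ (1 / m / 2) * (Real.log C_N + (2 * N) * (Real.log (2 * r₀) - m * Real.log 2)) :=
            hmul
        _ = (1 / m) * A + (1 / m) * Real.log M - N * Real.log 2 := by
            rw [hA]; field_simp; ring
    have h4 : (1 / m) * A ≤ 1 := by
      rw [div_mul_eq_mul_div, one_mul, div_le_one hmpos]
      exact hmA
    have h5 : (1 - 1 / m) * Real.log M = Real.log M - (1 / m) * Real.log M := by ring
    linarith
  -- choose N large to get a contradiction
  set B : ℝ := Real.log C + Real.log M + 1 - Real.log X with hB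
  obtain ⟨N, hN0, hNB⟩ : ∃ N : ℕ, 0 < N ∧ B < N * Real.log 2 := by
    refine ⟨⌈B / Real.log 2⌉₊ + 1, Nat.succ_pos _, ?_⟩
    have h1 : B / Real.log 2 ≤ ⌈B / Real.log 2⌉₊ := Nat.le_ceil _
    have h2 : (⌈B / Real.log 2⌉₊ : ℝ) < (⌈B / Real.log 2⌉₊ + 1 : ℕ) := by
      push_cast; linarith
    rw [div_le_iff₀ hlog2] at h1
    nlinarith
  have := key N hN0
  rw [hB] at hNB
  linarith
end
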